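/- In the prefix-guessing game with hidden uniform s ∈ {0,1}^d and batches of b prefix queries per round, the number of distinct possible answer vectors in a single round is at most b+1; consequently after r rounds the number of reachable transcript histories is at most (b+1)^r, and the probability of exactly identifying s after r rounds is at most (b+1)^r · 2^{−d} (times the number of final guesses allowed). -/

import Mathlib

open scoped Classical

/-- `isPref d s p` : whether the binary string `p` is a prefix of the hidden string
`s ∈ {0,1}^d`. -/
def isPref (d : ℕ) (s : Fin d → Bool) (p : List Bool) : Bool :=
  if h : p.length ≤ d then
    decide (∀ i : Fin p.length, p.get i = s ⟨i, i.2.trans_le h⟩)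
  else false

lemma isPref_iff (d : ℕ) (s : Fin d → Bool) (p : List Bool) :
    isPref d s p = true ↔ p <+: List.ofFn s := by
  unfold isPref
  split
  · rename_i h
    simp only [decide_eq_true_eq]
    constructor
    · intro hall
      refine List.prefix_iff_eq_take.2 ?_
      apply List.ext_get
      · simp [h]
      · intro n h1 h2
        have := hall ⟨n, h1⟩
        simp_all [List.getElem_take]
    · intro hp i
      have := List.IsPrefix.getElem hp i.2
      simp only [List.get_eq_getElem, this]
      simp
  · rename_i h
    simp only [Bool.false_eq_true, false_iff]
    intro hp
    exact h (by simpa using hp.length_le)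

lemma ans_mem (d b : ℕ) (batch : Fin b → List Bool) (s : Fin d → Bool) :
    (fun i : Fin b => isPref d s (batch i)) ∈
      insert (fun _ : Fin b => false)
        (Finset.univ.image fun j : Fin b => fun i : Fin b => decide (batch i <+: batch j)) := by
  classical
  set T := Finset.univ.filter (fun i : Fin b => isPref d s (batch i) = true) with hT
  by_cases hne : T.Nonempty
  · obtain ⟨j, hjT, hjmax⟩ := T.exists_max_image (fun i => (batch i).length) hne
    have hj : batch j <+: List.ofFn s := (isPref_iff d s (batch j)).1 (by simpa [hT] using hjT)
    refine Finset.mem_insert_of_mem (Finset.mem_image.2 ⟨j, Finset.mem_univ _, ?_⟩)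
    funext i
    by_cases hi : isPref d s (batch i) = true
    · have hip : batch i <+: List.ofFn s := (isPref_iff d s (batch i)).1 hi
      have hlen : (batch i).length ≤ (batch j).length :=
        hjmax i (by simp [hT, hi])
      have : batch i <+: batch j := List.prefix_of_prefix_length_le hip hj hlen
      simp [hi, this]
    · have : ¬ (batch i <+: batch j) := fun hpre =>
        hi ((isPref_iff d s (batch i)).2 (hpre.trans hj))
      simp [Bool.eq_false_iff.2 hi, this]
  · have : (fun i : Fin b => isPref d s (batch i)) = (fun _ : Fin b => false) := by
      funext i
      by_contra h
      exact hne ⟨i, by simp [hT, Bool.eq_false_iff, h]⟩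
    rw [this]
    exact Finset.mem_insert_self _ _

/-- Transcript of a batch strategy after `t` rounds: in each round the strategy submits a
batch of `b` prefix guesses (as a function of the answer vectors seen so far) and learns,
for each guess, whether it is a prefix of `s`. -/
def batchRun (d b : ℕ) (strat : List (Fin b → Bool) → (Fin b → List Bool))
    (s : Fin d → Bool) : ℕ → List (Fin b → Bool)
  | 0 => []
  | t + 1 =>
      batchRun d b strat s t ++
        [fun i => isPref d s (strat (batchRun d b strat s t) i)]

lemma part1 (d b : ℕ) (batch : Fin b → List Bool) :
    (Finset.univ.image fun s : Fin d → Bool =>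
      (fun i : Fin b => isPref d s (batch i))).card ≤ b + 1 := by
  classical
  have hsub : (Finset.univ.image fun s : Fin d → Bool =>
      (fun i : Fin b => isPref d s (batch i))) ⊆
      insert (fun _ : Fin b => false)
        (Finset.univ.image fun j : Fin b => fun i : Fin b => decide (batch i <+: batch j)) := by
    intro v hv
    obtain ⟨s, _, rfl⟩ := Finset.mem_image.1 hv
    exact ans_mem d b batch s
  calc _ ≤ _ := Finset.card_le_card hsub
    _ ≤ (Finset.univ.image fun j : Fin b => fun i : Fin b =>
          decide (batch i <+: batch j)).card + 1 := Finset.card_insert_le _ _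
    _ ≤ b + 1 := by
        have := Finset.card_image_le (s := (Finset.univ : Finset (Fin b)))
          (f := fun j : Fin b => fun i : Fin b => decide (batch i <+: batch j))
        simpa using Nat.add_le_add_right (by simpa using this) 1

lemma part2 (d b r : ℕ) (strat : List (Fin b → Bool) → (Fin b → List Bool)) :
    (Finset.univ.image fun s : Fin d → Bool => batchRun d b strat s r).card
       ≤ (b + 1) ^ r := by
  classical
  induction r with
  | zero =>
    simp only [batchRun, pow_zero]
    refine Finset.card_le_one.2 ?_
    intro a ha c hc
    obtain ⟨x, _, rfl⟩ := Finset.mem_image.1 ha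
    obtain ⟨y, _, rfl⟩ := Finset.mem_image.1 hc
    rfl
  | succ t ih =>
    set A := fun s : Fin d → Bool => batchRun d b strat s t with hA
    have hsub : (Finset.univ.image fun s : Fin d → Bool => batchRun d b strat s (t+1)) ⊆
        (Finset.univ.image A).biUnion (fun h =>
          (insert (fun _ : Fin b => false)
            (Finset.univ.image fun j : Fin b => fun i : Fin b =>
              decide (strat h i <+: strat h j))).image (fun v => h ++ [v])) := by
      intro l hl
      obtain ⟨s, _, rfl⟩ := Finset.mem_image.1 hl
      refine Finset.mem_biUnion.2 ⟨A s, Finset.mem_image_of_mem _ (Finset.mem_univ _), ?_⟩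
      exact Finset.mem_image_of_mem _ (ans_mem d b (strat (A s)) s)
    calc _ ≤ _ := Finset.card_le_card hsub
      _ ≤ ∑ h ∈ Finset.univ.image A,
            ((insert (fun _ : Fin b => false)
              (Finset.univ.image fun j : Fin b => fun i : Fin b =>
                decide (strat h i <+: strat h j))).image (fun v => h ++ [v])).card :=
          Finset.card_biUnion_le
      _ ≤ ∑ h ∈ Finset.univ.image A, (b + 1) := by
          refine Finset.sum_le_sum fun h _ => ?_
          calc _ ≤ _ := Finset.card_image_le
            _ ≤ (Finset.univ.image fun j : Fin b => fun i : Fin b =>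
                  decide (strat h i <+: strat h j)).card + 1 := Finset.card_insert_le _ _
            _ ≤ b + 1 := by
                have := Finset.card_image_le (s := (Finset.univ : Finset (Fin b)))
                  (f := fun j : Fin b => fun i : Fin b => decide (strat h i <+: strat h j))
                simpa using Nat.add_le_add_right (by simpa using this) 1
      _ = (Finset.univ.image A).card * (b + 1) := by simp [Finset.sum_const, Nat.mul_comm]
      _ ≤ (b + 1) ^ t * (b + 1) := Nat.mul_le_mul_right _ ih
      _ = (b + 1) ^ (t + 1) := (pow_succ _ _).symm

lemma part3cnt (d b r m : ℕ) (strat : List (Fin b → Bool) → (Fin b → List Bool))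
    (g : List (Fin b → Bool) → Fin m → (Fin d → Bool)) :
    (Finset.univ.filter fun s : Fin d → Bool =>
       ∃ i : Fin m, g (batchRun d b strat s r) i = s).card ≤ (b + 1) ^ r * m := by
  classical
  set A := fun s : Fin d → Bool => batchRun d b strat s r with hA
  have hsub : (Finset.univ.filter fun s : Fin d → Bool => ∃ i : Fin m, g (A s) i = s) ⊆
      (Finset.univ.image A).biUnion (fun h => Finset.univ.image (g h)) := by
    intro s hs
    obtain ⟨i, hi⟩ := (Finset.mem_filter.1 hs).2
    exact Finset.mem_biUnion.2 ⟨A s, Finset.mem_image_of_mem _ (Finset.mem_univ _),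
      Finset.mem_image.2 ⟨i, Finset.mem_univ _, hi⟩⟩
  calc _ ≤ _ := Finset.card_le_card hsub
    _ ≤ ∑ h ∈ Finset.univ.image A, (Finset.univ.image (g h)).card :=
        Finset.card_biUnion_le
    _ ≤ ∑ h ∈ Finset.univ.image A, m := by
        refine Finset.sum_le_sum fun h _ => ?_
        simpa using Finset.card_image_le (s := (Finset.univ : Finset (Fin m))) (f := g h)
    _ = (Finset.univ.image A).card * m := by simp [Finset.sum_const, Nat.mul_comm]
    _ ≤ (b + 1) ^ r * m := Nat.mul_le_mul_right _ (part2 d b r strat)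

/-- In the prefix-guessing game with hidden uniform `s ∈ {0,1}^d` and batches
of `b` prefix queries per round, the number of distinct possible answer vectors in a
single round is at most `b+1`; consequently after `r` rounds the number of reachable
transcript histories is at most `(b+1)^r`, and the probability of exactly identifying `s`
after `r` rounds is at most `(b+1)^r · 2^{−d}` times the number `m` of final guesses
allowed. -/
theorem stmt5 (d b r m : ℕ) (hb : 1 ≤ b)
    (strat : List (Fin b → Bool) → (Fin b → List Bool))
    (g : List (Fin b → Bool) → Fin m → (Fin d → Bool)) :
    (∀ batch : Fin b → List Bool,
       (Finset.univ.image fun s : Fin d → Bool =>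
         (fun i : Fin b => isPref d s (batch i))).card ≤ b + 1) ∧
    ((Finset.univ.image fun s : Fin d → Bool => batchRun d b strat s r).card
       ≤ (b + 1) ^ r) ∧
    (((Finset.univ.filter fun s : Fin d → Bool =>
         ∃ i : Fin m, g (batchRun d b strat s r) i = s).card : ℝ) / 2 ^ d
       ≤ ((b : ℝ) + 1) ^ r * (2 : ℝ) ^ (-(d : ℤ)) * m) := by
  refine ⟨part1 d b, part2 d b r strat, ?_⟩
  have hN : ((Finset.univ.filter fun s : Fin d → Bool =>
      ∃ i : Fin m, g (batchRun d b strat s r) i = s).card : ℝ) ≤ ((b : ℝ) + 1) ^ r * m := by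
    have := part3cnt d b r m strat g
    calc _ ≤ (((b + 1) ^ r * m : ℕ) : ℝ) := by exact_mod_cast this
      _ = ((b : ℝ) + 1) ^ r * m := by push_cast; ring
  have h2 : (2 : ℝ) ^ (-(d : ℤ)) = ((2 : ℝ) ^ d)⁻¹ := by
    rw [zpow_neg, zpow_natCast]
  rw [h2, div_eq_mul_inv]
  have hre : ((b : ℝ) + 1) ^ r * ((2 : ℝ) ^ d)⁻¹ * m
      = (((b : ℝ) + 1) ^ r * m) * ((2 : ℝ) ^ d)⁻¹ := by ring
  rw [hre]
  exact mul_le_mul_of_nonneg_right hN (by positivity)
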